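/- Let N be a positive integer, 1 ≤ k ≤ N, f a real-valued function on S(k) := {ξ ∈ {0,1}^N : Σᵢ ξᵢ = k}, and fix an index j. For p ∈ (0,1)^N define wᵢ = pᵢ/(1 − pᵢ), P(ξ | p, k) = (Πᵢ wᵢ^{ξᵢ}) / e_k(w), πⱼ = wⱼ e_{k−1}(w_{−j}) / e_k(w), and F_k(p) := Σ_{ξ ∈ S(k)} f(ξ) P(ξ | p, k). Then the partial derivative of F_k with respect to pⱼ exists at every p ∈ (0,1)^N and equals Σ_{ξ ∈ S(k)} f(ξ) P(ξ | p, k) · (ξⱼ − πⱼ)(1 + wⱼ)² / wⱼ, i.e. ∂F_k/∂pⱼ = E_{ξ ∼ P(·|p,k)}[f(ξ) ∂ log P(ξ | p, k)/∂pⱼ]. -/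

import Mathlib

open Finset

/-- The weights `wᵢ = pᵢ/(1 − pᵢ)` of the conditional Bernoulli model. -/
noncomputable def cbWeight {N : ℕ} (p : Fin N → ℝ) (i : Fin N) : ℝ :=
  p i / (1 - p i)

/-- `e_k(w(p))`: the `k`-th elementary symmetric polynomial of the weights. -/
noncomputable def cbEsymm {N : ℕ} (k : ℕ) (p : Fin N → ℝ) : ℝ :=
  ∑ S ∈ (univ : Finset (Fin N)).powersetCard k, ∏ i ∈ S, cbWeight p i

/-- `P(ξ | p, k) = (Πᵢ wᵢ^{ξᵢ}) / e_k(w)`: the conditional Bernoulli PMF. -/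
noncomputable def cbPMF {N : ℕ} (k : ℕ) (p : Fin N → ℝ)
    (ξ : Fin N → Fin 2) : ℝ :=
  (∏ i, cbWeight p i ^ (ξ i : ℕ)) / cbEsymm k p

/-- `πⱼ = wⱼ e_{k−1}(w_{−j}) / e_k(w)`: first-order inclusion probability. -/
noncomputable def cbInclusion {N : ℕ} (k : ℕ) (j : Fin N) (p : Fin N → ℝ) : ℝ :=
  cbWeight p j
    * (∑ S ∈ ((univ : Finset (Fin N)).erase j).powersetCard (k - 1),
        ∏ i ∈ S, cbWeight p i)
    / cbEsymm k p

lemma cbEsymm_split {N : ℕ} (k : ℕ) (hk1 : 1 ≤ k) (j : Fin N) (q : Fin N → ℝ) :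
    cbEsymm k q =
      cbWeight q j *
        (∑ S ∈ ((univ : Finset (Fin N)).erase j).powersetCard (k - 1),
          ∏ i ∈ S, cbWeight q i) +
      ∑ S ∈ ((univ : Finset (Fin N)).erase j).powersetCard k,
          ∏ i ∈ S, cbWeight q i := by
  obtain ⟨m, rfl⟩ : ∃ m, k = m + 1 := ⟨k - 1, by omega⟩
  have hins : (univ : Finset (Fin N)) = insert j (univ.erase j) :=
    (insert_erase (mem_univ j)).symm
  have hdisj : Disjoint ((univ.erase j : Finset (Fin N)).powersetCard (m+1))
      (((univ.erase j : Finset (Fin N)).powersetCard m).image (insert j)) := by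
    rw [disjoint_left]
    intro S hS hS'
    obtain ⟨T, hT, rfl⟩ := mem_image.mp hS'
    have hj : j ∈ insert j T := mem_insert_self j T
    have := (mem_powersetCard.mp hS).1 hj
    exact (notMem_erase j univ) this
  calc cbEsymm (m+1) q
      = ∑ S ∈ (insert j (univ.erase j)).powersetCard (m+1), ∏ i ∈ S, cbWeight q i := by
        rw [cbEsymm, ← hins]
    _ = ∑ S ∈ ((univ.erase j : Finset (Fin N)).powersetCard (m+1) ∪
          ((univ.erase j).powersetCard m).image (insert j)), ∏ i ∈ S, cbWeight q i := by
        rw [powersetCard_succ_insert (notMem_erase j univ)]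
    _ = (∑ S ∈ (univ.erase j : Finset (Fin N)).powersetCard (m+1), ∏ i ∈ S, cbWeight q i)
        + ∑ S ∈ ((univ.erase j : Finset (Fin N)).powersetCard m).image (insert j),
            ∏ i ∈ S, cbWeight q i := sum_union hdisj
    _ = cbWeight q j *
        (∑ S ∈ ((univ : Finset (Fin N)).erase j).powersetCard ((m+1) - 1),
          ∏ i ∈ S, cbWeight q i) +
        ∑ S ∈ ((univ : Finset (Fin N)).erase j).powersetCard (m+1),
          ∏ i ∈ S, cbWeight q i := by
        rw [add_comm]
        congr 1
        rw [Nat.add_sub_cancel, sum_image, mul_sum]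
        · apply sum_congr rfl
          intro S hS
          have hjS : j ∉ S := fun h => (notMem_erase j univ) ((mem_powersetCard.mp hS).1 h)
          rw [prod_insert hjS]
        · intro S hS T hT h
          have hjS : j ∉ S := fun h => (notMem_erase j univ) ((mem_powersetCard.mp hS).1 h)
          have hjT : j ∉ T := fun h => (notMem_erase j univ) ((mem_powersetCard.mp hT).1 h)
          rw [← erase_insert hjS, ← erase_insert hjT, h]

/-- Exact score-function (log-derivative) form of the policy gradient of the
budget-constrained stochastic ROED objective: the partial derivative of
`F_k(p) = Σ_{ξ ∈ S(k)} f(ξ) P(ξ | p, k)` with respect to `pⱼ` exists at every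
`p ∈ (0,1)^N` and equals
`Σ_{ξ ∈ S(k)} f(ξ) P(ξ | p, k) (ξⱼ − πⱼ)(1 + wⱼ)²/wⱼ`. -/
theorem stmt_19 (N : ℕ) (hN : 0 < N) (k : ℕ) (hk1 : 1 ≤ k) (hkN : k ≤ N)
    (f : (Fin N → Fin 2) → ℝ) (j : Fin N)
    (Fk : (Fin N → ℝ) → ℝ)
    (hFk : ∀ p, Fk p =
      ∑ ξ ∈ univ.filter (fun ξ : Fin N → Fin 2 => (∑ i, (ξ i : ℕ)) = k),
        f ξ * cbPMF k p ξ)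
    (p : Fin N → ℝ) (hp : ∀ i, p i ∈ Set.Ioo (0 : ℝ) 1) :
    HasDerivAt (fun t : ℝ => Fk (Function.update p j t))
      (∑ ξ ∈ univ.filter (fun ξ : Fin N → Fin 2 => (∑ i, (ξ i : ℕ)) = k),
        f ξ * cbPMF k p ξ
          * (((ξ j : ℕ) - cbInclusion k j p)
              * (1 + cbWeight p j) ^ 2 / cbWeight p j))
      (p j) := by
  obtain ⟨hp0, hp1⟩ := hp j
  have h1t : (1 : ℝ) - p j ≠ 0 := by linarith
  set w := cbWeight p j with hw
  have hwval : w = p j / (1 - p j) := rfl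
  have hwpos : 0 < w := by rw [hwval]; exact div_pos hp0 (by linarith)
  set a := ∑ S ∈ ((univ : Finset (Fin N)).erase j).powersetCard (k - 1),
      ∏ i ∈ S, cbWeight p i with ha
  set b := ∑ S ∈ ((univ : Finset (Fin N)).erase j).powersetCard k,
      ∏ i ∈ S, cbWeight p i with hb
  have hwi : ∀ i : Fin N, 0 < cbWeight p i := fun i => by
    have h1 := (hp i).1
    have h2 := (hp i).2
    exact div_pos h1 (by linarith)
  have hapos : 0 < a := by
    rw [ha]
    apply Finset.sum_pos
    · exact fun S _ => Finset.prod_pos fun i _ => hwi i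
    · apply Finset.powersetCard_nonempty_of_le
      have : ((univ : Finset (Fin N)).erase j).card = N - 1 := by
        rw [Finset.card_erase_of_mem (mem_univ j), card_univ, Fintype.card_fin]
      omega
  have hbnn : 0 ≤ b := by
    rw [hb]
    exact Finset.sum_nonneg fun S _ => Finset.prod_nonneg fun i _ => (hwi i).le
  have hden : 0 < w * a + b := by positivity
  have hE : cbEsymm k p = w * a + b := by
    rw [cbEsymm_split k hk1 j p, ← hw, ← ha, ← hb]
  have hwupdate : ∀ (t : ℝ) (i : Fin N), i ≠ j →
      cbWeight (Function.update p j t) i = cbWeight p i := by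
    intro t i hij
    simp [cbWeight, Function.update_of_ne hij]
  have hwj : ∀ t : ℝ, cbWeight (Function.update p j t) j = t / (1 - t) := by
    intro t
    simp [cbWeight, Function.update_self]
  have hEsplit : ∀ t : ℝ, cbEsymm k (Function.update p j t) = (t / (1 - t)) * a + b := by
    intro t
    rw [cbEsymm_split k hk1 j, hwj t, ha, hb]
    congr 1
    · congr 1
      apply sum_congr rfl
      intro S hS
      apply prod_congr rfl
      intro i hi
      exact hwupdate t i (ne_of_mem_erase ((mem_powersetCard.mp hS).1 hi))
    · apply sum_congr rfl
      intro S hS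
      apply prod_congr rfl
      intro i hi
      exact hwupdate t i (ne_of_mem_erase ((mem_powersetCard.mp hS).1 hi))
  have hwt : p j / (1 - p j) = w := rfl
  have hwder : HasDerivAt (fun t : ℝ => t / (1 - t)) ((1 + w) ^ 2) (p j) := by
    have hnum : HasDerivAt (fun t : ℝ => t) 1 (p j) := hasDerivAt_id (p j)
    have hden' : HasDerivAt (fun t : ℝ => 1 - t) (-1) (p j) := hnum.const_sub 1
    have h := hnum.div hden' h1t
    refine h.congr_deriv ?_
    symm
    rw [hwval]
    field_simp
    ring
  have key : ∀ ξ : Fin N → Fin 2,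
      HasDerivAt (fun t : ℝ => f ξ * cbPMF k (Function.update p j t) ξ)
        (f ξ * cbPMF k p ξ *
          (((ξ j : ℕ) - cbInclusion k j p) * (1 + w) ^ 2 / w)) (p j) := by
    intro ξ
    set ε := ((ξ j : ℕ)) with hε
    set C := ∏ i ∈ (univ : Finset (Fin N)).erase j, cbWeight p i ^ ((ξ i : ℕ)) with hC
    have hCnn : 0 ≤ C := by
      rw [hC]; exact Finset.prod_nonneg fun i _ => pow_nonneg (hwi i).le _
    have hprod : ∀ t : ℝ,
        (∏ i, cbWeight (Function.update p j t) i ^ ((ξ i : ℕ))) = (t / (1 - t)) ^ ε * C := by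
      intro t
      rw [← Finset.mul_prod_erase univ _ (mem_univ j), hwj t, hC]
      congr 1
      apply prod_congr rfl
      intro i hi
      rw [hwupdate t i (ne_of_mem_erase hi)]
    have hPMF : ∀ t : ℝ, cbPMF k (Function.update p j t) ξ
        = (t / (1 - t)) ^ ε * C / ((t / (1 - t)) * a + b) := by
      intro t
      rw [cbPMF, hprod t, hEsplit t]
    have hP0 : cbPMF k p ξ = w ^ ε * C / (w * a + b) := by
      rw [cbPMF, hE, ← Finset.mul_prod_erase univ _ (mem_univ j), ← hC, ← hw]
    have hIncl : cbInclusion k j p = w * a / (w * a + b) := by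
      rw [cbInclusion, hE, ← hw, ← ha]
    have hnum : HasDerivAt (fun t : ℝ => (t / (1 - t)) ^ ε * C)
        ((↑ε * (p j / (1 - p j)) ^ (ε - 1) * (1 + w) ^ 2) * C) (p j) :=
      (hwder.pow ε).mul_const C
    have hdenf : HasDerivAt (fun t : ℝ => (t / (1 - t)) * a + b)
        ((1 + w) ^ 2 * a) (p j) := (hwder.mul_const a).add_const b
    have hden0 : (p j / (1 - p j)) * a + b ≠ 0 := by rw [hwt]; exact ne_of_gt hden
    have h := (hnum.div hdenf hden0).const_mul (f ξ)
    rw [hwt] at h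
    have hfun : (fun t : ℝ => f ξ * cbPMF k (Function.update p j t) ξ)
        = fun t : ℝ => f ξ * ((t / (1 - t)) ^ ε * C / ((t / (1 - t)) * a + b)) := by
      funext t
      rw [hPMF t]
    rw [hfun, hP0, hIncl]
    refine h.congr_deriv ?_
    symm
    have hεcase : ε = 0 ∨ ε = 1 := by
      have := (ξ j).isLt
      omega
    have hden' : w * a + b ≠ 0 := ne_of_gt hden
    rcases hεcase with h0 | h1
    · rw [h0]
      push_cast
      field_simp
      ring
    · rw [h1]
      push_cast
      field_simp
  have hfun : (fun t : ℝ => Fk (Function.update p j t))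
      = fun t : ℝ => ∑ ξ ∈ univ.filter (fun ξ : Fin N → Fin 2 => (∑ i, (ξ i : ℕ)) = k),
          f ξ * cbPMF k (Function.update p j t) ξ := by
    funext t
    exact hFk _
  rw [hfun]
  exact HasDerivAt.fun_sum fun ξ _ => key ξ
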